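/- Fix an integer p ≥ 1 and a real s ≥ 2. On the product space H = ⊕_{j=1}^p L²([0,1]) equipped with the norm ‖X‖_{H,s} = (Σ_j ‖X_j‖_{L²}^s)^{1/s}, for any X, V ∈ H the function t ↦ ‖X + tV‖_{H,s}² is twice differentiable at t = 0 (when all components of X are nonzero) and satisfies ∂²_t|_{t=0} ‖X + tV‖_{H,s}² ≤ 2(s−1) ‖V‖_{H,s}². -/

import Mathlib

open MeasureTheory Finset

theorem main_aux (p : ℕ) (hp : 1 ≤ p) (s : ℝ) (hs : 2 ≤ s) (a b c : Fin p → ℝ)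
    (ha : ∀ j, 0 < a j) (hc : ∀ j, 0 ≤ c j) (hbc : ∀ j, b j ^ 2 ≤ a j * c j) :
    DifferentiableAt ℝ (fun t : ℝ => (∑ j, (a j + 2 * b j * t + c j * t ^ 2) ^ (s/2)) ^ (2/s)) 0 ∧
    DifferentiableAt ℝ (deriv (fun t : ℝ => (∑ j, (a j + 2 * b j * t + c j * t ^ 2) ^ (s/2)) ^ (2/s))) 0 ∧
    iteratedDeriv 2 (fun t : ℝ => (∑ j, (a j + 2 * b j * t + c j * t ^ 2) ^ (s/2)) ^ (2/s)) 0
      ≤ 2 * (s-1) * (∑ j, c j ^ (s/2)) ^ (2/s) := by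
  have hs0 : (0:ℝ) < s := by linarith
  have hne : Nonempty (Fin p) := Fin.pos_iff_nonempty.mp (by omega)
  set φ : Fin p → ℝ → ℝ := fun j t => a j + 2 * b j * t + c j * t ^ 2 with hφ
  set g : ℝ → ℝ := fun t => ∑ j, φ j t ^ (s/2) with hg
  set G : ℝ → ℝ := fun t => ∑ j, (2 * b j + 2 * c j * t) * (s/2) * φ j t ^ (s/2 - 1) with hG
  have hF : (fun t : ℝ => (∑ j, (a j + 2 * b j * t + c j * t ^ 2) ^ (s/2)) ^ (2/s))
      = fun t => g t ^ (2/s) := rfl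
  rw [hF]
  -- derivative of φ j
  have hφd : ∀ j (t : ℝ), HasDerivAt (φ j) (2 * b j + 2 * c j * t) t := by
    intro j t
    have h1 : HasDerivAt (fun t : ℝ => a j + 2 * b j * t) (2 * b j) t := by
      simpa using ((hasDerivAt_id t).const_mul (2 * b j)).const_add (a j)
    have h2 : HasDerivAt (fun t : ℝ => c j * t ^ 2) (c j * (2 * t)) t := by
      simpa using (hasDerivAt_pow 2 t).const_mul (c j)
    have := h1.add h2
    exact this.congr_deriv (by ring)
  -- derivative of g
  have hgd : ∀ t : ℝ, (∀ j, 0 < φ j t) → HasDerivAt g (G t) t := by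
    intro t ht
    exact HasDerivAt.fun_sum fun j _ => (hφd j t).rpow_const (Or.inl (ht j).ne')
  have hgpos : ∀ t : ℝ, (∀ j, 0 < φ j t) → 0 < g t := fun t ht =>
    Finset.sum_pos (fun j _ => Real.rpow_pos_of_pos (ht j) _) univ_nonempty
  -- derivative of F
  have hFd : ∀ t : ℝ, (∀ j, 0 < φ j t) → HasDerivAt (fun t => g t ^ (2/s))
      (G t * (2/s) * g t ^ (2/s - 1)) t := by
    intro t ht
    exact (hgd t ht).rpow_const (Or.inl (hgpos t ht).ne')
  have hφ0 : ∀ j, φ j 0 = a j := by intro j; simp [hφ]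
  have hev : ∀ᶠ t in nhds (0:ℝ), ∀ j, 0 < φ j t := by
    rw [Filter.eventually_all]
    intro j
    have hcont : Continuous (φ j) := by fun_prop
    have h0 : 0 < φ j 0 := (hφ0 j) ▸ ha j
    exact (hcont.tendsto 0).eventually (eventually_gt_nhds h0)
  have h0pos : ∀ j, 0 < φ j 0 := fun j => (hφ0 j) ▸ ha j
  -- second derivative data
  have hg0 : HasDerivAt g (G 0) 0 := hgd 0 h0pos
  have hgne : g 0 ≠ 0 := (hgpos 0 h0pos).ne'
  have hlin : ∀ j, HasDerivAt (fun t : ℝ => (2 * b j + 2 * c j * t) * (s/2)) (2 * c j * (s/2)) 0 := by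
    intro j
    have : HasDerivAt (fun t : ℝ => 2 * b j + 2 * c j * t) (2 * c j) 0 := by
      simpa using ((hasDerivAt_id (0:ℝ)).const_mul (2 * c j)).const_add (2 * b j)
    exact this.mul_const (s/2)
  have hG0' : HasDerivAt G (∑ j, (2 * c j * (s/2) * (φ j 0 ^ (s/2 - 1)) +
      (2 * b j + 2 * c j * 0) * (s/2) *
        ((2 * b j + 2 * c j * 0) * (s/2 - 1) * φ j 0 ^ (s/2 - 1 - 1)))) 0 :=
    HasDerivAt.fun_sum (fun j _ =>
      (hlin j).mul ((hφd j 0).rpow_const (p := s/2 - 1) (Or.inl (h0pos j).ne')))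
  set D2 : ℝ := (∑ j, (2 * c j * (s/2) * (φ j 0 ^ (s/2 - 1)) +
      (2 * b j + 2 * c j * 0) * (s/2) *
        ((2 * b j + 2 * c j * 0) * (s/2 - 1) * φ j 0 ^ (s/2 - 1 - 1)))) * (2/s) * g 0 ^ (2/s - 1)
      + G 0 * (2/s) * (G 0 * (2/s - 1) * g 0 ^ (2/s - 1 - 1)) with hD2
  have hF' : HasDerivAt (fun t => G t * (2/s) * g t ^ (2/s - 1)) D2 0 :=
    (hG0'.mul_const (2/s)).mul (hg0.rpow_const (Or.inl hgne))
  have hder : deriv (fun t => g t ^ (2/s)) =ᶠ[nhds (0:ℝ)]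
      (fun t => G t * (2/s) * g t ^ (2/s - 1)) := hev.mono fun t ht => (hFd t ht).deriv
  refine ⟨(hFd 0 h0pos).differentiableAt, ?_, ?_⟩
  · exact (Filter.EventuallyEq.differentiableAt_iff hder).mpr hF'.differentiableAt
  · have h2 : iteratedDeriv 2 (fun t => g t ^ (2/s)) 0 = D2 := by
      rw [iteratedDeriv_succ, iteratedDeriv_one, hder.deriv_eq, hF'.deriv]
    rw [h2, hD2]
    set A : ℝ := ∑ j, a j ^ (s/2 - 1) * b j with hA
    set B : ℝ := ∑ j, a j ^ (s/2 - 2) * b j ^ 2 with hB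
    set C : ℝ := ∑ j, a j ^ (s/2 - 1) * c j with hC
    set D : ℝ := ∑ j, c j ^ (s/2) with hD
    have hg0v : g 0 = ∑ j, a j ^ (s/2) := by
      simp only [hg]
      exact Finset.sum_congr rfl fun j _ => by rw [hφ0]
    have hg0pos : 0 < ∑ j, a j ^ (s/2) := by
      rw [← hg0v]; exact hgpos 0 h0pos
    have hG0v : G 0 = s * A := by
      simp only [hG, hA, Finset.mul_sum]
      exact Finset.sum_congr rfl fun j _ => by rw [hφ0]; ring
    have hGdv : (∑ j, (2 * c j * (s/2) * (φ j 0 ^ (s/2 - 1)) +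
        (2 * b j + 2 * c j * 0) * (s/2) *
          ((2 * b j + 2 * c j * 0) * (s/2 - 1) * φ j 0 ^ (s/2 - 1 - 1)))) = s * (s-2) * B + s * C := by
      simp only [hB, hC, Finset.mul_sum, ← Finset.sum_add_distrib]
      refine Finset.sum_congr rfl fun j _ => ?_
      rw [hφ0, show s/2 - 1 - 1 = s/2 - 2 from by ring]; ring
    rw [hGdv, hG0v, hg0v, show (2:ℝ)/s - 1 - 1 = 2/s - 2 from by ring]
    -- key inequalities
    have step2 : B ≤ C := by
      refine Finset.sum_le_sum fun j _ => ?_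
      calc a j ^ (s/2 - 2) * b j ^ 2 ≤ a j ^ (s/2 - 2) * (a j * c j) :=
            mul_le_mul_of_nonneg_left (hbc j) (Real.rpow_nonneg (ha j).le _)
        _ = a j ^ (s/2 - 1) * c j := by
            rw [show s/2 - 1 = (s/2 - 2) + 1 from by ring, Real.rpow_add_one (ha j).ne']; ring
    have step3 : C ≤ (∑ j, a j ^ (s/2)) ^ (1 - 2/s) * D ^ (2/s) := by
      rcases eq_or_lt_of_le hs with heq | hlt
      · simp only [hC, hD]
        rw [← heq]
        norm_num
      · have h2ne : s - 2 ≠ 0 := by linarith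
        have hpq : Real.HolderConjugate (s/(s-2)) (s/2) := by
          constructor
          · rw [show (s/(s-2))⁻¹ = (s-2)/s from by field_simp, show (s/2)⁻¹ = 2/s from by field_simp, inv_one]
            field_simp
            ring
          · exact div_pos hs0 (by linarith)
          · exact div_pos hs0 two_pos
        have hH := Real.inner_le_Lp_mul_Lq_of_nonneg (univ : Finset (Fin p)) hpq
          (f := fun j => a j ^ (s/2 - 1)) (g := fun j => c j)
          (fun j _ => Real.rpow_nonneg (ha j).le _) (fun j _ => hc j)
        rw [show (1:ℝ)/(s/(s-2)) = 1 - 2/s from by rw [one_div_div]; field_simp, one_div_div] at hH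
        calc C ≤ (∑ j, (a j ^ (s/2 - 1)) ^ (s/(s-2))) ^ (1 - 2/s) * (∑ j, c j ^ (s/2)) ^ (2/s) := hH
          _ = (∑ j, a j ^ (s/2)) ^ (1 - 2/s) * D ^ (2/s) := by
              rw [hD]
              congr 2
              refine Finset.sum_congr rfl fun j _ => ?_
              rw [← Real.rpow_mul (ha j).le,
                show (s/2-1)*(s/(s-2)) = s/2 from by field_simp]
    have hg0nn : (0:ℝ) ≤ (∑ j, a j ^ (s/2)) := hg0pos.le
    have step1 : (s*A)*(2/s)*((s*A)*(2/s-1)*(∑ j, a j ^ (s/2))^(2/s-2)) ≤ 0 := by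
      have he : (s*A)*(2/s)*((s*A)*(2/s-1)*(∑ j, a j ^ (s/2))^(2/s-2))
          = (2*(2-s)) * (A^2 * (∑ j, a j ^ (s/2))^(2/s-2)) := by
        field_simp
      rw [he]
      exact mul_nonpos_of_nonpos_of_nonneg (by linarith)
        (mul_nonneg (sq_nonneg A) (Real.rpow_nonneg hg0nn _))
    have e1 : (s*(s-2)*B + s*C) * (2/s) * (∑ j, a j ^ (s/2))^(2/s-1)
        ≤ (2*(s-1)*C) * (∑ j, a j ^ (s/2))^(2/s-1) := by
      apply mul_le_mul_of_nonneg_right _ (Real.rpow_nonneg hg0nn _)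
      have hBC : s*(s-2)*B ≤ s*(s-2)*C :=
        mul_le_mul_of_nonneg_left step2 (by nlinarith)
      have heq2 : (2*(s-1)*C) = (s*(s-2)*C + s*C) * (2/s) := by field_simp; ring
      rw [heq2]
      exact mul_le_mul_of_nonneg_right (by linarith) (div_nonneg (by norm_num) hs0.le)
    have e2 : (2*(s-1)*C) * (∑ j, a j ^ (s/2))^(2/s-1) ≤ 2*(s-1)*D^(2/s) := by
      have h1 : (2*(s-1)*C) * (∑ j, a j ^ (s/2))^(2/s-1)
          ≤ (2*(s-1)*((∑ j, a j ^ (s/2))^(1-2/s)*D^(2/s))) * (∑ j, a j ^ (s/2))^(2/s-1) := by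
        apply mul_le_mul_of_nonneg_right _ (Real.rpow_nonneg hg0nn _)
        exact mul_le_mul_of_nonneg_left step3 (by linarith)
      have h2' : (2*(s-1)*((∑ j, a j ^ (s/2))^(1-2/s)*D^(2/s))) * (∑ j, a j ^ (s/2))^(2/s-1)
          = 2*(s-1)*D^(2/s) := by
        rw [show (2*(s-1)*((∑ j, a j ^ (s/2))^(1-2/s)*D^(2/s))) * (∑ j, a j ^ (s/2))^(2/s-1)
            = 2*(s-1)*D^(2/s) * ((∑ j, a j ^ (s/2))^(1-2/s) * (∑ j, a j ^ (s/2))^(2/s-1)) from by ring,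
          ← Real.rpow_add hg0pos, show (1-2/s)+(2/s-1) = (0:ℝ) from by ring, Real.rpow_zero, mul_one]
      linarith
    linarith

/-- `(2, √(s−1))`-smoothness of the composite norm on `H = ⊕_{j=1}^p L²([0,1])` with
`‖X‖_{H,s} = (Σ_j ‖X_j‖_{L²}^s)^{1/s}`: for `s ≥ 2` and `X, V ∈ H` with all components of `X`
nonzero, the function `t ↦ ‖X + tV‖_{H,s}²` is twice differentiable at `t = 0` and its second
derivative there is at most `2(s−1)‖V‖_{H,s}²`. -/
theorem composite_norm_two_smooth (p : ℕ) (hp : 1 ≤ p) (s : ℝ) (hs : 2 ≤ s)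
    (X V : Fin p → Lp ℝ 2 (volume.restrict (Set.Icc (0 : ℝ) 1)))
    (hX : ∀ j, X j ≠ 0) :
    letI N : ℝ → ℝ := fun t => (∑ j, ‖X j + t • V j‖ ^ s) ^ (2 / s)
    DifferentiableAt ℝ N 0 ∧ DifferentiableAt ℝ (deriv N) 0 ∧
      iteratedDeriv 2 N 0 ≤ 2 * (s - 1) * (∑ j, ‖V j‖ ^ s) ^ (2 / s) := by
  show DifferentiableAt ℝ (fun t : ℝ => (∑ j, ‖X j + t • V j‖ ^ s) ^ (2 / s)) 0 ∧
    DifferentiableAt ℝ (deriv (fun t : ℝ => (∑ j, ‖X j + t • V j‖ ^ s) ^ (2 / s))) 0 ∧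
      iteratedDeriv 2 (fun t : ℝ => (∑ j, ‖X j + t • V j‖ ^ s) ^ (2 / s)) 0
        ≤ 2 * (s - 1) * (∑ j, ‖V j‖ ^ s) ^ (2 / s)
  have hnorm : ∀ x : Lp ℝ 2 (volume.restrict (Set.Icc (0 : ℝ) 1)),
      ‖x‖ ^ s = (‖x‖ ^ 2 : ℝ) ^ (s/2) := by
    intro x
    rw [← Real.rpow_natCast ‖x‖ 2, ← Real.rpow_mul (norm_nonneg x)]
    norm_num
    rw [show (2:ℝ)*(s/2) = s from by ring]
  have hexp : ∀ (j : Fin p) (t : ℝ), ‖X j + t • V j‖ ^ 2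
      = ‖X j‖ ^ 2 + 2 * (inner ℝ (X j) (V j) : ℝ) * t + ‖V j‖ ^ 2 * t ^ 2 := by
    intro j t
    rw [norm_add_sq_real, real_inner_smul_right, norm_smul, mul_pow, Real.norm_eq_abs, sq_abs]
    ring
  have hfun : (fun t : ℝ => (∑ j, ‖X j + t • V j‖ ^ s) ^ (2/s))
      = (fun t : ℝ => (∑ j, (‖X j‖ ^ 2 + 2 * (inner ℝ (X j) (V j) : ℝ) * t
          + ‖V j‖ ^ 2 * t ^ 2) ^ (s/2)) ^ (2/s)) := by
    funext t
    congr 1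
    exact Finset.sum_congr rfl fun j _ => by rw [hnorm, hexp]
  have hrhs : (∑ j, ‖V j‖ ^ s) = ∑ j, ((‖V j‖ : ℝ) ^ 2) ^ (s/2) :=
    Finset.sum_congr rfl fun j _ => hnorm (V j)
  rw [hfun, hrhs]
  exact main_aux p hp s hs (fun j => ‖X j‖ ^ 2) (fun j => (inner ℝ (X j) (V j) : ℝ))
    (fun j => ‖V j‖ ^ 2)
    (fun j => pow_pos (norm_pos_iff.mpr (hX j)) 2)
    (fun j => sq_nonneg _)
    (fun j => by
      have h := real_inner_mul_inner_self_le (X j) (V j)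
      rw [real_inner_self_eq_norm_sq, real_inner_self_eq_norm_sq] at h
      calc (inner ℝ (X j) (V j) : ℝ) ^ 2 = (inner ℝ (X j) (V j) : ℝ) * (inner ℝ (X j) (V j) : ℝ) := sq _
        _ ≤ ‖X j‖ ^ 2 * ‖V j‖ ^ 2 := h)
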